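/- Let k ∈ ℕ and R > 0. There exists a constant C > 0, depending only on k and R, such that for every choice of points x₁,…,x_k ∈ ℝ², every measurable set Ω ⊆ ℝ² contained in the ball B_R(0), and every λ ≥ 1, one has ∫_{Ω \ ⋃_{i=1}^k B_{1/λ}(x_i)} dist(x, {x₁,…,x_k})^{−2} dx ≤ 2πk log λ + C, where dist(x, {x₁,…,x_k}) = min_{i=1,…,k} ‖x − x_i‖. -/

import Mathlib

open MeasureTheory Metric Set

lemma vol_unit_ball : (volume (ball (0 : EuclideanSpace ℝ (Fin 2)) 1)).toReal = Real.pi := by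
  rw [EuclideanSpace.volume_ball]
  norm_num [Real.sq_sqrt Real.pi_nonneg]
  exact Real.pi_nonneg

lemma annulus_integral (p : EuclideanSpace ℝ (Fin 2)) {r b : ℝ} (hr : 0 < r) (hrb : r ≤ b) :
    ∫ x in {x : EuclideanSpace ℝ (Fin 2) | dist x p ∈ Ico r b}, ((dist x p) ^ 2)⁻¹ =
      2 * Real.pi * (Real.log b - Real.log r) := by
  set f : ℝ → ℝ := (Ico r b).indicator (fun t => (t ^ 2)⁻¹) with hf
  have hA : MeasurableSet {x : EuclideanSpace ℝ (Fin 2) | dist x p ∈ Ico r b} :=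
    (measurable_dist.comp (measurable_id.prodMk measurable_const)) measurableSet_Ico
  have h1 : ∫ x in {x : EuclideanSpace ℝ (Fin 2) | dist x p ∈ Ico r b}, ((dist x p) ^ 2)⁻¹ =
      ∫ x : EuclideanSpace ℝ (Fin 2), f (dist x p) := by
    rw [← integral_indicator hA]
    apply integral_congr_ae
    filter_upwards with x
    by_cases h : dist x p ∈ Ico r b
    · simp only [hf, Set.indicator_of_mem h,
        Set.indicator_of_mem (show x ∈ {x | dist x p ∈ Ico r b} from h)]
    · simp only [hf, Set.indicator_of_notMem h,
        Set.indicator_of_notMem (show x ∉ {x | dist x p ∈ Ico r b} from h)]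
  have h2 : ∫ x : EuclideanSpace ℝ (Fin 2), f (dist x p) =
      ∫ x : EuclideanSpace ℝ (Fin 2), f ‖x‖ := by
    simp_rw [dist_eq_norm]
    exact integral_sub_right_eq_self (fun x => f ‖x‖) p
  have h3 := integral_fun_norm_addHaar (volume : Measure (EuclideanSpace ℝ (Fin 2))) f
  have hdim : Module.finrank ℝ (EuclideanSpace ℝ (Fin 2)) = 2 := finrank_euclideanSpace_fin
  rw [hdim] at h3
  have h4 : (fun y : ℝ => y ^ (2 - 1) • f y) = (Ico r b).indicator (fun t => t⁻¹) := by
    funext y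
    by_cases h : y ∈ Ico r b
    · have hy : y ≠ 0 := by have := lt_of_lt_of_le hr h.1; positivity
      simp [hf, indicator, h, smul_eq_mul]
      field_simp
    · simp [hf, indicator, h]
  rw [h4] at h3
  have h5 : ∫ y in Ioi (0:ℝ), (Ico r b).indicator (fun t => t⁻¹) y = ∫ y in Ico r b, y⁻¹ := by
    have hsub : Ico r b ⊆ Ioi (0:ℝ) := fun y hy => lt_of_lt_of_le hr hy.1
    rw [setIntegral_indicator measurableSet_Ico, inter_eq_right.mpr hsub]
  have h6 : ∫ y in Ico r b, (y:ℝ)⁻¹ = Real.log b - Real.log r := by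
    rw [integral_Ico_eq_integral_Ioo, ← integral_Ioc_eq_integral_Ioo,
      ← intervalIntegral.integral_of_le hrb, integral_inv_of_pos hr (lt_of_lt_of_le hr hrb),
      Real.log_div (ne_of_gt (lt_of_lt_of_le hr hrb)) (ne_of_gt hr)]
  rw [h1, h2, h3, h5, h6, measureReal_def, vol_unit_ball]
  simp only [nsmul_eq_mul, smul_eq_mul]
  ring


lemma meas_g (p : EuclideanSpace ℝ (Fin 2)) :
    Measurable (fun x : EuclideanSpace ℝ (Fin 2) => ((dist x p) ^ 2)⁻¹) :=
  (((continuous_id.dist continuous_const).pow 2).measurable).inv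

lemma integrableOn_g {p : EuclideanSpace ℝ (Fin 2)} {s : Set (EuclideanSpace ℝ (Fin 2))}
    (hs : MeasurableSet s) (hfin : volume s ≠ ⊤) {r : ℝ} (hr : 0 < r)
    (h : ∀ x ∈ s, r ≤ dist x p) :
    IntegrableOn (fun x => ((dist x p) ^ 2)⁻¹) s := by
  apply Measure.integrableOn_of_bounded (M := (r ^ 2)⁻¹) hfin (meas_g p).aestronglyMeasurable
  refine (ae_restrict_mem hs).mono fun x hx => ?_
  have h1 : r ^ 2 ≤ dist x p ^ 2 := pow_le_pow_left₀ hr.le (h x hx) 2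
  have h2 : (0:ℝ) < r ^ 2 := by positivity
  rw [Real.norm_eq_abs, abs_of_nonneg (by positivity)]
  exact inv_anti₀ h2 h1

lemma point_bound (R : ℝ) (hR : 0 < R) (p : EuclideanSpace ℝ (Fin 2))
    (S : Set (EuclideanSpace ℝ (Fin 2))) (hS : MeasurableSet S) (hSR : S ⊆ ball 0 R)
    (lam : ℝ) (hlam : 1 ≤ lam) :
    ∫ x in S \ ball p (1/lam), ((dist x p) ^ 2)⁻¹ ≤
      2 * Real.pi * Real.log lam + (2 * Real.pi * |Real.log (3*R)| + Real.pi) := by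
  have hlam0 : (0:ℝ) < lam := lt_of_lt_of_le one_pos hlam
  have hr : (0:ℝ) < 1/lam := by positivity
  have hloglam : 0 ≤ Real.log lam := Real.log_nonneg hlam
  have hDsub : ∀ x ∈ S \ ball p (1/lam), 1/lam ≤ dist x p := fun x hx =>
    le_of_not_gt (by simpa [mem_ball] using hx.2)
  have hDmeas : MeasurableSet (S \ ball p (1/lam)) := hS.diff measurableSet_ball
  have hDlt : volume (S \ ball p (1/lam)) < ⊤ :=
    lt_of_le_of_lt (measure_mono (fun x hx => hSR hx.1)) measure_ball_lt_top
  by_cases hp : dist p 0 ≤ 2*R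
  · by_cases hb : 1/lam < 3*R
    · have hsub : S \ ball p (1/lam) ⊆ {x | dist x p ∈ Ico (1/lam) (3*R)} := by
        intro x hx
        refine ⟨hDsub x hx, ?_⟩
        calc dist x p ≤ dist x 0 + dist 0 p := dist_triangle x 0 p
          _ < R + 2*R := add_lt_add_of_lt_of_le (mem_ball.1 (hSR hx.1)) (by rwa [dist_comm])
          _ = 3*R := by ring
      have hAmeas : MeasurableSet {x : EuclideanSpace ℝ (Fin 2) | dist x p ∈ Ico (1/lam) (3*R)} :=
        (measurable_dist.comp (measurable_id.prodMk measurable_const)) measurableSet_Ico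
      have hAfin : volume {x : EuclideanSpace ℝ (Fin 2) | dist x p ∈ Ico (1/lam) (3*R)} ≠ ⊤ := by
        refine ne_top_of_le_ne_top measure_closedBall_lt_top.ne
          (measure_mono fun x hx => ?_ : _ ≤ volume (closedBall p (3*R)))
        exact mem_closedBall.2 hx.2.le
      have hint : IntegrableOn (fun x => ((dist x p) ^ 2)⁻¹)
          {x : EuclideanSpace ℝ (Fin 2) | dist x p ∈ Ico (1/lam) (3*R)} :=
        integrableOn_g hAmeas hAfin hr (fun x hx => hx.1)
      have step1 := setIntegral_mono_set hint
        (ae_of_all _ fun x => by positivity) (HasSubset.Subset.eventuallyLE hsub)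
      have step2 := annulus_integral p hr hb.le
      rw [step2] at step1
      have hlog : Real.log (1/lam) = -Real.log lam := by
        rw [one_div, Real.log_inv]
      rw [hlog] at step1
      refine step1.trans ?_
      have h1 : Real.log (3*R) ≤ |Real.log (3*R)| := le_abs_self _
      nlinarith [Real.pi_pos]
    · have hempty : S \ ball p (1/lam) = ∅ := by
        ext x
        simp only [mem_diff, mem_empty_iff_false, iff_false, not_and, not_not]
        intro hxS
        apply mem_ball.2
        calc dist x p ≤ dist x 0 + dist 0 p := dist_triangle x 0 p
          _ < R + 2*R := add_lt_add_of_lt_of_le (mem_ball.1 (hSR hxS)) (by rwa [dist_comm])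
          _ = 3*R := by ring
          _ ≤ 1/lam := le_of_not_gt hb
      rw [hempty]
      simp only [Measure.restrict_empty, integral_zero_measure]
      have := abs_nonneg (Real.log (3*R))
      nlinarith [Real.pi_pos]
  · push_neg at hp
    have hfar : ∀ x ∈ S \ ball p (1/lam), ‖((dist x p) ^ 2)⁻¹‖ ≤ (R ^ 2)⁻¹ := by
      intro x hx
      have h1 : R ≤ dist x p := by
        have h2 : dist x 0 < R := mem_ball.1 (hSR hx.1)
        have h3 := dist_triangle p x 0
        rw [dist_comm p x] at h3
        linarith
      rw [Real.norm_eq_abs, abs_of_nonneg (by positivity)]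
      exact inv_anti₀ (by positivity) (pow_le_pow_left₀ hR.le h1 2)
    have hnorm := norm_setIntegral_le_of_norm_le_const (μ := volume) hDlt hfar
    have hvol : (volume (S \ ball p (1/lam))).toReal ≤ Real.pi * R ^ 2 := by
      have h1 : volume (S \ ball p (1/lam)) ≤ ENNReal.ofReal (Real.pi * R ^ 2) := by
        refine le_trans (measure_mono (fun x hx => hSR hx.1)) ?_
        rw [EuclideanSpace.volume_ball]
        rw [show ((Fintype.card (Fin 2) : ℕ) : ℝ) = 2 by norm_num]
        norm_num [Real.sq_sqrt Real.pi_nonneg]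
        rw [← ENNReal.ofReal_pow hR.le]
        exact le_of_eq (by rw [← ENNReal.ofReal_mul (by positivity : (0:ℝ) ≤ R^2), mul_comm])
      exact ENNReal.toReal_le_of_le_ofReal (by positivity) h1
    have hle : ∫ x in S \ ball p (1/lam), ((dist x p) ^ 2)⁻¹ ≤ (R ^ 2)⁻¹ * (Real.pi * R ^ 2) := by
      refine le_trans (le_abs_self _) ?_
      refine le_trans hnorm ?_
      have : (0:ℝ) ≤ (R ^ 2)⁻¹ := by positivity
      exact mul_le_mul_of_nonneg_left hvol this
    have hRne : (R:ℝ) ^ 2 ≠ 0 := by positivity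
    have : (R ^ 2)⁻¹ * (Real.pi * R ^ 2) = Real.pi := by field_simp
    rw [this] at hle
    refine hle.trans ?_
    have := abs_nonneg (Real.log (3*R))
    nlinarith [Real.pi_pos]

/-- for points `x₁,…,x_k ∈ ℝ²`, a measurable `Ω ⊆ B_R(0)` and `λ ≥ 1`, the
integral of `dist(x,{x₁,…,x_k})⁻²` over `Ω` minus the balls of radius `1/λ` around the `xᵢ`
is bounded by `2πk log λ + C`, with `C` depending only on `k` and `R`. -/
theorem integral_inv_sq_dist_bound (k : ℕ) (R : ℝ) (hR : 0 < R) :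
    ∃ C : ℝ, 0 < C ∧
      ∀ (X : Fin k → EuclideanSpace ℝ (Fin 2))
        (Ω : Set (EuclideanSpace ℝ (Fin 2))), MeasurableSet Ω → Ω ⊆ ball 0 R →
        ∀ lam : ℝ, 1 ≤ lam →
          ∫ x in Ω \ ⋃ i, ball (X i) (1 / lam), ((infDist x (Set.range X)) ^ 2)⁻¹ ≤
            2 * Real.pi * k * Real.log lam + C := by
  set C₁ : ℝ := 2 * Real.pi * |Real.log (3*R)| + Real.pi with hC₁
  have hC₁pos : 0 < C₁ := by
    have := abs_nonneg (Real.log (3*R))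
    have := Real.pi_pos
    positivity
  refine ⟨k * C₁ + 1, by positivity, ?_⟩
  intro X Ω hΩ hΩR lam hlam
  have hlam0 : (0:ℝ) < lam := lt_of_lt_of_le one_pos hlam
  have hr : (0:ℝ) < 1/lam := by positivity
  have hloglam : 0 ≤ Real.log lam := Real.log_nonneg hlam
  rcases Nat.eq_zero_or_pos k with hk | hk
  · subst hk
    have hrange : Set.range X = ∅ := Set.range_eq_empty X
    simp only [hrange, infDist_empty]
    norm_num
  · haveI : Nonempty (Fin k) := ⟨⟨0, hk⟩⟩
    set D := Ω \ ⋃ i, ball (X i) (1/lam) with hD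
    have hDmeas : MeasurableSet D := hΩ.diff (MeasurableSet.iUnion fun i => measurableSet_ball)
    have hDsub : D ⊆ ball 0 R := fun x hx => hΩR hx.1
    have hDfin : volume D ≠ ⊤ := ((measure_mono hDsub).trans_lt measure_ball_lt_top).ne
    have hDdist : ∀ x ∈ D, ∀ i, 1/lam ≤ dist x (X i) := fun x hx i =>
      le_of_not_gt fun h => hx.2 (mem_iUnion.2 ⟨i, mem_ball.2 h⟩)
    have hwit : ∀ x : EuclideanSpace ℝ (Fin 2), ∃ i, infDist x (Set.range X) = dist x (X i) := by
      intro x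
      obtain ⟨y, hy, hyd⟩ := (Set.finite_range X).isCompact.exists_infDist_eq_dist
        (Set.range_nonempty X) x
      obtain ⟨i, rfl⟩ := hy
      exact ⟨i, hyd⟩
    have hptwise : ∀ x ∈ D, ((infDist x (Set.range X)) ^ 2)⁻¹ ≤
        ∑ i : Fin k, ((dist x (X i)) ^ 2)⁻¹ := by
      intro x _
      obtain ⟨i, hi⟩ := hwit x
      rw [hi]
      exact Finset.single_le_sum (f := fun i => ((dist x (X i)) ^ 2)⁻¹)
        (fun j _ => by positivity) (Finset.mem_univ i)
    have hfmeas : Measurable fun x : EuclideanSpace ℝ (Fin 2) =>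
        ((infDist x (Set.range X)) ^ 2)⁻¹ :=
      (((continuous_infDist_pt _).pow 2).measurable).inv
    have hfint : IntegrableOn (fun x => ((infDist x (Set.range X)) ^ 2)⁻¹) D := by
      apply Measure.integrableOn_of_bounded (M := ((1/lam) ^ 2)⁻¹) hDfin
        hfmeas.aestronglyMeasurable
      refine (ae_restrict_mem hDmeas).mono fun x hx => ?_
      obtain ⟨i, hi⟩ := hwit x
      rw [Real.norm_eq_abs, abs_of_nonneg (by positivity), hi]
      exact inv_anti₀ (by positivity) (pow_le_pow_left₀ hr.le (hDdist x hx i) 2)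
    have hgint : ∀ i : Fin k, IntegrableOn (fun x => ((dist x (X i)) ^ 2)⁻¹) D := fun i =>
      integrableOn_g hDmeas hDfin hr (fun x hx => hDdist x hx i)
    have hsumint : IntegrableOn (fun x => ∑ i : Fin k, ((dist x (X i)) ^ 2)⁻¹) D :=
      integrable_finset_sum _ (fun i _ => hgint i)
    have step1 := setIntegral_mono_on hfint hsumint hDmeas hptwise
    have step2 : ∫ x in D, ∑ i : Fin k, ((dist x (X i)) ^ 2)⁻¹ =
        ∑ i : Fin k, ∫ x in D, ((dist x (X i)) ^ 2)⁻¹ :=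
      integral_finset_sum _ (fun i _ => hgint i)
    have step3 : ∀ i : Fin k, ∫ x in D, ((dist x (X i)) ^ 2)⁻¹ ≤
        ∫ x in Ω \ ball (X i) (1/lam), ((dist x (X i)) ^ 2)⁻¹ := by
      intro i
      have hsub : D ⊆ Ω \ ball (X i) (1/lam) := fun x hx =>
        ⟨hx.1, fun h => hx.2 (mem_iUnion.2 ⟨i, h⟩)⟩
      have hfin : volume (Ω \ ball (X i) (1/lam)) ≠ ⊤ :=
        ((measure_mono fun x hx => hΩR hx.1).trans_lt measure_ball_lt_top).ne
      have hbd : ∀ x ∈ Ω \ ball (X i) (1/lam), 1/lam ≤ dist x (X i) := fun x hx =>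
        le_of_not_gt fun h => hx.2 (mem_ball.2 h)
      exact setIntegral_mono_set (integrableOn_g (hΩ.diff measurableSet_ball) hfin hr hbd)
        (ae_of_all _ fun x => by positivity) (HasSubset.Subset.eventuallyLE hsub)
    have step4 : ∀ i : Fin k, ∫ x in Ω \ ball (X i) (1/lam), ((dist x (X i)) ^ 2)⁻¹ ≤
        2 * Real.pi * Real.log lam + C₁ := fun i =>
      point_bound R hR (X i) Ω hΩ hΩR lam hlam
    refine (step1.trans_eq step2).trans ?_
    refine le_trans (Finset.sum_le_sum (fun i _ => (step3 i).trans (step4 i))) ?_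
    rw [Finset.sum_const, Finset.card_univ, Fintype.card_fin, nsmul_eq_mul]
    have h : (k:ℝ) * (2 * Real.pi * Real.log lam + C₁) =
        2 * Real.pi * k * Real.log lam + k * C₁ := by ring
    rw [h]
    linarith
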